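/- arXiv:1709.09481 — 2 statements merged into one kernel-verified Lean document; each statement's English description precedes it below -/
import Mathlib

section
/- Let L₁, L₂, … be i.i.d. nonnegative random variables with P(L > x) ≤ 1/g(x) for a non-decreasing function g tending to infinity. For any sequence a_m → ∞ and constants δ, ε₂ > 0, define z_L(m) implicitly by z_L(m)·g^{(-1)}(z_L(m)^{1+ε₂}) = a_m^{1−δ}, and T_m := g^{(-1)}(z_L(m)^{1+ε₂}). Then P(∑_{i=1}^{z_L(m)} L_i ≥ a_m) ≤ z_L(m)^{−ε₂} + a_m^{−δ}. -/
open MeasureTheory ProbabilityTheory Filter Finset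

/-- Let `(L_i)` be i.i.d. nonnegative random variables with tail
`P(L > x) ≤ 1/g(x)` for a non-decreasing `g` tending to infinity, with generalized inverse
`g⁻¹(x) = inf{y : g(y) ≥ x}`. For a sequence `a_m → ∞` (positive) and `δ, ε₂ > 0`, if
`z_L(m)` satisfies `z_L(m)·g⁻¹(z_L(m)^{1+ε₂}) = a_m^{1−δ}`, then
`P(∑_{i=1}^{z_L(m)} L_i ≥ a_m) ≤ z_L(m)^{−ε₂} + a_m^{−δ}`. -/
theorem truncation_sum_bound {Ω : Type*} [MeasureSpace Ω]
    [IsProbabilityMeasure (ℙ : Measure Ω)]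
    (L : ℕ → Ω → ℝ)
    (hmeas : ∀ i, Measurable (L i))
    (hnonneg : ∀ i ω, 0 ≤ L i ω)
    (hindep : iIndepFun L ℙ)
    (hident : ∀ i, Measure.map (L i) ℙ = Measure.map (L 0) ℙ)
    (g : ℝ → ℝ) (hg : Monotone g) (hgtop : Tendsto g atTop atTop)
    (hgpos : ∀ x, 0 < g x)
    (htail : ∀ i, ∀ x : ℝ, (ℙ {ω | x < L i ω}).toReal ≤ 1 / g x)
    (a : ℕ → ℝ) (hapos : ∀ m, 1 < a m) (ha : Tendsto a atTop atTop)
    (δ ε₂ : ℝ) (hδ : 0 < δ) (hε₂ : 0 < ε₂)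
    (z : ℕ → ℕ) (hzpos : ∀ m, 0 < z m)
    (hz : ∀ m, (z m : ℝ) * sInf {y : ℝ | (z m : ℝ) ^ (1 + ε₂) ≤ g y} = a m ^ (1 - δ)) :
    ∀ m : ℕ,
      (ℙ {ω | a m ≤ ∑ i ∈ Finset.range (z m), L i ω}).toReal ≤
        (z m : ℝ) ^ (-ε₂) + a m ^ (-δ) := by
  intro m
  set zR : ℝ := (z m : ℝ) with hzR
  have hz1 : (1:ℝ) ≤ zR := by rw [hzR]; exact_mod_cast hzpos m
  have hz0 : (0:ℝ) < zR := lt_of_lt_of_le one_pos hz1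
  set c : ℝ := zR ^ (1 + ε₂) with hc
  have hc0 : 0 < c := Real.rpow_pos_of_pos hz0 _
  set S : Set ℝ := {y : ℝ | c ≤ g y} with hS
  set T : ℝ := sInf S with hT
  have hSne : S.Nonempty := (hgtop.eventually_ge_atTop c).exists
  have key : ∀ y, T < y → c ≤ g y := by
    intro y hy
    by_cases hbdd : BddBelow S
    · obtain ⟨s, hsS, hsy⟩ := (csInf_lt_iff hbdd hSne).mp hy
      exact le_trans hsS (hg hsy.le)
    · obtain ⟨s, hsS, hsy⟩ := not_bddBelow_iff.mp hbdd y
      exact le_trans hsS (hg hsy.le)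
  have hzT : zR * T = a m ^ (1 - δ) := hz m
  have ha1 : 1 < a m := hapos m
  have ha0 : 0 < a m := lt_trans one_pos ha1
  have haa : a m ^ (1 - δ) < a m := by
    calc a m ^ (1-δ) < a m ^ (1:ℝ) :=
          Real.rpow_lt_rpow_of_exponent_lt ha1 (by linarith)
      _ = a m := Real.rpow_one _
  have hTlt : T < a m / zR := by
    rw [lt_div_iff₀ hz0]
    nlinarith [hzT]
  set T' : ℝ := (T + a m / zR) / 2 with hT'
  have hTT' : T < T' := by
    simp only [hT']; linarith
  have hT'a : T' < a m / zR := by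
    simp only [hT']; linarith
  have hgT' : c ≤ g T' := key T' hTT'
  have hzT'a : zR * T' < a m := by
    have := (lt_div_iff₀ hz0).mp hT'a
    linarith
  have hincl : {ω | a m ≤ ∑ i ∈ Finset.range (z m), L i ω} ⊆
      ⋃ i ∈ Finset.range (z m), {ω | T' < L i ω} := by
    intro ω hω
    by_contra h
    simp only [Set.mem_iUnion, Set.mem_setOf_eq, not_exists, not_lt] at h
    have hsum : ∑ i ∈ Finset.range (z m), L i ω ≤ ∑ i ∈ Finset.range (z m), T' :=
      Finset.sum_le_sum (fun i hi => h i hi)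
    rw [Finset.sum_const, Finset.card_range, nsmul_eq_mul] at hsum
    have : a m ≤ ∑ i ∈ Finset.range (z m), L i ω := hω
    linarith
  have hmu : ℙ {ω | a m ≤ ∑ i ∈ Finset.range (z m), L i ω} ≤
      ∑ i ∈ Finset.range (z m), ℙ {ω | T' < L i ω} :=
    (measure_mono hincl).trans (measure_biUnion_finset_le _ _)
  have hfin : ∀ i ∈ Finset.range (z m), ℙ {ω | T' < L i ω} ≠ ⊤ :=
    fun i _ => measure_ne_top _ _
  have htoReal : (ℙ {ω | a m ≤ ∑ i ∈ Finset.range (z m), L i ω}).toReal ≤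
      ∑ i ∈ Finset.range (z m), (ℙ {ω | T' < L i ω}).toReal := by
    rw [← ENNReal.toReal_sum hfin]
    exact ENNReal.toReal_mono (ENNReal.sum_ne_top.mpr hfin) hmu
  have hterm : ∀ i ∈ Finset.range (z m), (ℙ {ω | T' < L i ω}).toReal ≤ 1 / c := by
    intro i _
    refine (htail i T').trans ?_
    exact one_div_le_one_div_of_le hc0 hgT'
  have hsumbound : ∑ i ∈ Finset.range (z m), (ℙ {ω | T' < L i ω}).toReal ≤
      zR * (1 / c) := by
    calc ∑ i ∈ Finset.range (z m), (ℙ {ω | T' < L i ω}).toReal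
        ≤ ∑ i ∈ Finset.range (z m), (1 / c) := Finset.sum_le_sum hterm
      _ = zR * (1 / c) := by
          rw [Finset.sum_const, Finset.card_range, nsmul_eq_mul]
  have hcalc : zR * (1 / c) = zR ^ (-ε₂) := by
    rw [hc, one_div, ← Real.rpow_neg hz0.le]
    have h1 : zR * zR ^ (-(1 + ε₂)) = zR ^ ((1:ℝ) + -(1 + ε₂)) := by
      rw [Real.rpow_add hz0, Real.rpow_one]
    rw [h1, show (1:ℝ) + -(1 + ε₂) = -ε₂ by ring]
  have hadelta : 0 ≤ a m ^ (-δ) := Real.rpow_nonneg ha0.le _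
  calc (ℙ {ω | a m ≤ ∑ i ∈ Finset.range (z m), L i ω}).toReal
      ≤ zR * (1 / c) := htoReal.trans hsumbound
    _ = zR ^ (-ε₂) := hcalc
    _ ≤ zR ^ (-ε₂) + a m ^ (-δ) := by linarith
end

section
/- Let D_n, B_n be ℕ-valued random variables where B_n is the size-biased version of D_n minus one, i.e. P(B_n = k) = (k+1)·P(D_n = k+1)/E[D_n]. If 1 − F_n(x) ≥ x^{−(τ−1)} e^{−C(log x)^γ} for the distribution function F_n of D_n with τ ∈ (2,3), then there is C* > 0 such that 1 − F_{B_n}(x) ≥ x^{−(τ−2)} e^{−C*(log x)^γ} for all large x. -/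
open MeasureTheory ProbabilityTheory Real

/-- Let `D_n` have law `μ` on ℕ with finite mean, and `B_n` (law `ν`) its
size-biased version minus one: `P(B_n = k) = (k+1)·P(D_n = k+1)/E[D_n]`. If
`1 − F_n(x) = P(D_n > x) ≥ x^{−(τ−1)}e^{−C(log x)^γ}` with `τ ∈ (2,3)`, `C > 0`,
`γ ∈ (0,1)`, then there is `C* > 0` with
`1 − F_{B_n}(x) = P(B_n > x) ≥ x^{−(τ−2)}e^{−C*(log x)^γ}` for all large `x`. -/
theorem size_biased_tail_lower_bound (τ C γ : ℝ) (hτ₁ : 2 < τ) (hτ₂ : τ < 3)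
    (hC : 0 < C) (hγ₀ : 0 < γ) (hγ₁ : γ < 1)
    (μ ν : Measure ℕ) [IsProbabilityMeasure μ] [IsProbabilityMeasure ν]
    (hmean : (∑' k : ℕ, (k : ENNReal) * μ {k}) ≠ ⊤)
    (hmean0 : (∑' k : ℕ, (k : ENNReal) * μ {k}) ≠ 0)
    (hsb : ∀ k : ℕ,
      ν {k} = ((k : ENNReal) + 1) * μ {k + 1} / (∑' j : ℕ, (j : ENNReal) * μ {j}))
    (htail : ∀ x : ℕ, 1 ≤ x →
      (x : ℝ) ^ (-(τ - 1)) * Real.exp (-C * (Real.log x) ^ γ) ≤ (μ {n | x < n}).toReal) :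
    ∃ Cstar > 0, ∃ x₀ : ℕ, ∀ x : ℕ, x₀ ≤ x →
      (x : ℝ) ^ (-(τ - 2)) * Real.exp (-Cstar * (Real.log x) ^ γ) ≤
        (ν {n | x < n}).toReal := by
  classical
  set M : ENNReal := ∑' k : ℕ, (k : ENNReal) * μ {k} with hMdef
  set Mr : ℝ := M.toReal with hMrdef
  have hMr : 0 < Mr := ENNReal.toReal_pos hmean0 hmean
  -- key ENNReal inequality: ν-tail dominates (x+2)·μ-tail(x+1)/M
  have key : ∀ x : ℕ, ((x : ENNReal) + 2) * μ {n | x + 1 < n} / M ≤ ν {n | x < n} := by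
    intro x
    have h1 : (∑' k : ℕ, Set.indicator {n | x < n} (fun k => ν {k}) k) = ν {n | x < n} :=
      ν.tsum_indicator_apply_singleton _ .of_discrete
    have h3 : ν {n | x < n}
        = (∑' k : ℕ, Set.indicator {n | x < n}
            (fun k => ((k : ENNReal) + 1) * μ {k + 1}) k) / M := by
      rw [← h1]
      rw [div_eq_mul_inv, ← ENNReal.tsum_mul_right]
      refine tsum_congr fun k => ?_
      by_cases hk : x < k
      · simp only [Set.indicator_apply, Set.mem_setOf_eq, if_pos hk, hsb k, div_eq_mul_inv]
      · simp only [Set.indicator_apply, Set.mem_setOf_eq, if_neg hk, zero_mul]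
    rw [h3]
    refine ENNReal.div_le_div_right ?_ M
    have h4 : μ {n | x + 1 < n}
        = ∑' k : ℕ, Set.indicator {n | x < n} (fun k => μ {k + 1}) k := by
      rw [← μ.tsum_indicator_apply_singleton {n | x + 1 < n} .of_discrete,
        tsum_eq_zero_add' ENNReal.summable]
      have h0 : Set.indicator {n | x + 1 < n} (fun m => μ {m}) 0 = 0 := by
        simp [Set.indicator_apply]
      rw [h0, zero_add]
      refine tsum_congr fun k => ?_
      simp only [Set.indicator_apply, Set.mem_setOf_eq, Nat.add_lt_add_iff_right]
    rw [h4, ← ENNReal.tsum_mul_left]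
    refine ENNReal.tsum_le_tsum fun k => ?_
    by_cases hk : x < k
    · simp only [Set.indicator_apply, Set.mem_setOf_eq, if_pos hk]
      refine mul_le_mul_left ?_ _
      have hxk : (x + 2 : ℕ) ≤ (k + 1 : ℕ) := by omega
      calc (x : ENNReal) + 2 = ((x + 2 : ℕ) : ENNReal) := by push_cast; ring
        _ ≤ ((k + 1 : ℕ) : ENNReal) := by exact_mod_cast hxk
        _ = (k : ENNReal) + 1 := by push_cast; ring
    · simp [Set.indicator_apply, hk]
  -- transfer to real numbers
  have hν : ∀ x : ℕ, ((x : ℝ) + 2) * (μ {n | x + 1 < n}).toReal / Mr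
      ≤ (ν {n | x < n}).toReal := by
    intro x
    have hA : (((x : ENNReal) + 2) * μ {n | x + 1 < n} / M).toReal
        = ((x : ℝ) + 2) * (μ {n | x + 1 < n}).toReal / Mr := by
      rw [ENNReal.toReal_div, ENNReal.toReal_mul, ENNReal.toReal_add (by simp) (by simp)]
      simp [hMrdef]
    rw [← hA]
    exact ENNReal.toReal_mono (measure_ne_top ν _) (key x)
  -- choose the constant
  set K : ℝ := max (Real.log (2 * Mr)) 0 + 1 with hKdef
  have hK0 : 0 < K := by
    have := le_max_right (Real.log (2 * Mr)) 0
    simp only [hKdef]; linarith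
  have hKlog : Real.log (2 * Mr) ≤ K := by
    have := le_max_left (Real.log (2 * Mr)) 0
    simp only [hKdef]; linarith
  refine ⟨2 * C + K, by linarith, 3, fun x hx => ?_⟩
  have hr : (3 : ℝ) ≤ (x : ℝ) := by exact_mod_cast hx
  set r : ℝ := (x : ℝ) with hrdef
  have hr0 : (0 : ℝ) < r := by linarith
  have hL1 : 1 ≤ Real.log r := by
    have he : Real.exp 1 ≤ 3 := le_trans Real.exp_one_lt_d9.le (by norm_num)
    exact (Real.le_log_iff_exp_le hr0).mpr (he.trans hr)
  have hLγ1 : 1 ≤ (Real.log r) ^ γ := by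
    calc (1 : ℝ) = (Real.log r) ^ (0 : ℝ) := (Real.rpow_zero _).symm
      _ ≤ (Real.log r) ^ γ := Real.rpow_le_rpow_of_exponent_le hL1 hγ₀.le
  have hLγnn : 0 ≤ (Real.log r) ^ γ := Real.rpow_nonneg (by linarith) γ
  -- log(r+1)^γ ≤ 2 log(r)^γ
  have hLog : Real.log (r + 1) ≤ 2 * Real.log r := by
    have h1 : r + 1 ≤ r * r := by nlinarith
    have h2 : Real.log (r + 1) ≤ Real.log (r * r) := Real.log_le_log (by linarith) h1
    rw [Real.log_mul (by linarith) (by linarith)] at h2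
    linarith
  have hLγ : (Real.log (r + 1)) ^ γ ≤ 2 * (Real.log r) ^ γ := by
    have h0 : (0 : ℝ) ≤ Real.log (r + 1) := Real.log_nonneg (by linarith)
    calc (Real.log (r + 1)) ^ γ ≤ (2 * Real.log r) ^ γ :=
          Real.rpow_le_rpow h0 hLog hγ₀.le
      _ = 2 ^ γ * (Real.log r) ^ γ := Real.mul_rpow (by norm_num) (by linarith)
      _ ≤ 2 * (Real.log r) ^ γ := by
          have h2 : (2 : ℝ) ^ γ ≤ 2 := by
            calc (2 : ℝ) ^ γ ≤ 2 ^ (1 : ℝ) :=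
                  Real.rpow_le_rpow_of_exponent_le (by norm_num) hγ₁.le
              _ = 2 := Real.rpow_one 2
          exact mul_le_mul_of_nonneg_right h2 hLγnn
  -- exponential bound
  have hExpKey : Real.exp (-(2 * C + K) * (Real.log r) ^ γ) * (2 * Mr)
      ≤ Real.exp (-(2 * C) * (Real.log r) ^ γ) := by
    rw [← Real.exp_log (show (0 : ℝ) < 2 * Mr by positivity), ← Real.exp_add]
    refine Real.exp_le_exp.mpr ?_
    nlinarith [mul_le_mul_of_nonneg_left hLγ1 hK0.le]
  -- rpow algebra
  have hsplit : (r + 1) ^ (-(τ - 2)) = (r + 1) * (r + 1) ^ (-(τ - 1)) := by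
    have h : -(τ - 2) = 1 + -(τ - 1) := by ring
    rw [h, Real.rpow_add (by linarith), Real.rpow_one]
  have hhalf : (1 / 2 : ℝ) * r ^ (-(τ - 2)) ≤ (r + 1) ^ (-(τ - 2)) := by
    have h1 : (2 * r) ^ (-(τ - 2)) ≤ (r + 1) ^ (-(τ - 2)) :=
      Real.rpow_le_rpow_of_nonpos (by linarith) (by linarith) (by linarith)
    have h2 : (2 * r) ^ (-(τ - 2)) = 2 ^ (-(τ - 2)) * r ^ (-(τ - 2)) :=
      Real.mul_rpow (by norm_num) hr0.le
    have h3 : (1 / 2 : ℝ) ≤ 2 ^ (-(τ - 2)) := by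
      have h4 : (2 : ℝ) ^ (-1 : ℝ) ≤ 2 ^ (-(τ - 2)) :=
        Real.rpow_le_rpow_of_exponent_le (by norm_num) (by linarith)
      rwa [Real.rpow_neg_one, show ((2:ℝ)⁻¹ = 1/2) by norm_num] at h4
    have h5 : 0 ≤ r ^ (-(τ - 2)) := Real.rpow_nonneg hr0.le _
    nlinarith
  -- the tail bound for μ at x+1
  have hT := htail (x + 1) (by omega)
  push_cast at hT
  rw [← hrdef] at hT
  set T : ℝ := (μ {n | x + 1 < n}).toReal with hTdef
  have hTnn : 0 ≤ T := ENNReal.toReal_nonneg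
  have hexp1 : Real.exp (-(2 * C) * (Real.log r) ^ γ)
      ≤ Real.exp (-C * (Real.log (r + 1)) ^ γ) := by
    refine Real.exp_le_exp.mpr ?_
    nlinarith
  calc r ^ (-(τ - 2)) * Real.exp (-(2 * C + K) * (Real.log r) ^ γ)
      = (1 / (2 * Mr)) * (r ^ (-(τ - 2))
          * (Real.exp (-(2 * C + K) * (Real.log r) ^ γ) * (2 * Mr))) := by
        field_simp
    _ ≤ (1 / (2 * Mr)) * (r ^ (-(τ - 2)) * Real.exp (-(2 * C) * (Real.log r) ^ γ)) := by
        refine mul_le_mul_of_nonneg_left ?_ (by positivity)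
        exact mul_le_mul_of_nonneg_left hExpKey (Real.rpow_nonneg hr0.le _)
    _ = ((1 / 2) * r ^ (-(τ - 2))) * Real.exp (-(2 * C) * (Real.log r) ^ γ) / Mr := by
        ring
    _ ≤ ((r + 1) ^ (-(τ - 2))) * Real.exp (-C * (Real.log (r + 1)) ^ γ) / Mr := by
        exact div_le_div_of_nonneg_right (mul_le_mul hhalf hexp1 (Real.exp_nonneg _)
          (Real.rpow_nonneg (by linarith) _)) hMr.le
    _ ≤ ((r + 2) * (r + 1) ^ (-(τ - 1))) * Real.exp (-C * (Real.log (r + 1)) ^ γ) / Mr := by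
        have h6 : (r + 1) ^ (-(τ - 2)) ≤ (r + 2) * (r + 1) ^ (-(τ - 1)) := by
          rw [hsplit]
          exact mul_le_mul_of_nonneg_right (by linarith) (Real.rpow_nonneg (by linarith) _)
        exact div_le_div_of_nonneg_right (mul_le_mul_of_nonneg_right h6 (Real.exp_nonneg _)) hMr.le
    _ = (r + 2) * ((r + 1) ^ (-(τ - 1)) * Real.exp (-C * (Real.log (r + 1)) ^ γ)) / Mr := by
        ring
    _ ≤ (r + 2) * T / Mr := by
        exact div_le_div_of_nonneg_right (mul_le_mul_of_nonneg_left hT (by linarith)) hMr.le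
    _ ≤ (ν {n | x < n}).toReal := hν x
end
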